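/- In the Baumslag–Solitar group B = BS(1,2) = ⟨g, t | g⁻¹tg = t²⟩, the centralizer of the image of t is locally cyclic (every finitely generated subgroup of it is cyclic) but is not itself cyclic. -/

import Mathlib

/-- The Baumslag–Solitar group `BS(1,2) = ⟨g, t ∣ g⁻¹tg = t²⟩`, as the quotient of the free
group on `g = of true`, `t = of false` by the normal closure of `g⁻¹·t·g·t⁻²`. -/
abbrev BS12 : Type :=
  FreeGroup Bool ⧸ Subgroup.normalClosure
    {(FreeGroup.of true)⁻¹ * FreeGroup.of false * FreeGroup.of true *
      (FreeGroup.of false)⁻¹ * (FreeGroup.of false)⁻¹}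

/-- The image of `t` in `BS(1,2)`. -/
def tBS : BS12 :=
  QuotientGroup.mk' _ (FreeGroup.of false)

def gBS : BS12 :=
  QuotientGroup.mk' _ (FreeGroup.of true)

-- basic relation
lemma BS_rel : gBS⁻¹ * tBS * gBS = tBS ^ 2 := by
  have h : (QuotientGroup.mk' (Subgroup.normalClosure
      {(FreeGroup.of true)⁻¹ * FreeGroup.of false * FreeGroup.of true *
        (FreeGroup.of false)⁻¹ * (FreeGroup.of false)⁻¹}))
      ((FreeGroup.of true)⁻¹ * FreeGroup.of false * FreeGroup.of true *
        (FreeGroup.of false)⁻¹ * (FreeGroup.of false)⁻¹) = 1 := by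
    rw [QuotientGroup.mk'_apply, QuotientGroup.eq_one_iff]
    exact Subgroup.subset_normalClosure rfl
  simp only [map_mul, map_inv] at h
  have := h
  rw [show (QuotientGroup.mk' _) (FreeGroup.of true) = gBS from rfl,
      show (QuotientGroup.mk' _) (FreeGroup.of false) = tBS from rfl] at this
  calc gBS⁻¹ * tBS * gBS
      = (gBS⁻¹ * tBS * gBS * tBS⁻¹ * tBS⁻¹) * tBS ^ 2 := by group
    _ = tBS ^ 2 := by rw [this]; group

-- conjugation lemmas
lemma conj_t_zpow (k : ℤ) : gBS⁻¹ * tBS ^ k * gBS = tBS ^ (2 * k) := by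
  have h1 : gBS⁻¹ * tBS ^ k * gBS = (gBS⁻¹ * tBS * gBS⁻¹⁻¹) ^ k := by
    rw [conj_zpow]; group
  rw [h1, inv_inv, BS_rel, ← zpow_natCast, ← zpow_mul]
  norm_num [mul_comm]

lemma lemA (n : ℕ) (k : ℤ) : tBS ^ k * gBS ^ n = gBS ^ n * tBS ^ (k * 2 ^ n) := by
  induction n generalizing k with
  | zero => simp
  | succ n ih =>
    have : tBS ^ k * gBS = gBS * tBS ^ (2 * k) := by
      have := conj_t_zpow k
      calc tBS ^ k * gBS = gBS * (gBS⁻¹ * tBS ^ k * gBS) := by group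
        _ = gBS * tBS ^ (2 * k) := by rw [this]
    calc tBS ^ k * gBS ^ (n + 1) = (tBS ^ k * gBS) * gBS ^ n := by rw [pow_succ']; group
      _ = gBS * (tBS ^ (2 * k) * gBS ^ n) := by rw [this]; group
      _ = gBS * (gBS ^ n * tBS ^ (2 * k * 2 ^ n)) := by rw [ih]
      _ = gBS ^ (n + 1) * tBS ^ (k * 2 ^ (n + 1)) := by
          rw [pow_succ']; rw [show 2 * k * 2 ^ n = k * 2 ^ (n+1) by ring]; group

lemma lemB (n : ℕ) (k : ℤ) : (gBS ^ n)⁻¹ * tBS ^ k = tBS ^ (k * 2 ^ n) * (gBS ^ n)⁻¹ := by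
  have := lemA n k
  calc (gBS ^ n)⁻¹ * tBS ^ k = (gBS ^ n)⁻¹ * (tBS ^ k * gBS ^ n) * (gBS ^ n)⁻¹ := by group
    _ = (gBS ^ n)⁻¹ * (gBS ^ n * tBS ^ (k * 2 ^ n)) * (gBS ^ n)⁻¹ := by rw [this]
    _ = tBS ^ (k * 2 ^ n) * (gBS ^ n)⁻¹ := by group

-- normal form
lemma normal_form (x : BS12) :
    ∃ (p q : ℕ) (k : ℤ), x = gBS ^ p * tBS ^ k * (gBS ^ q)⁻¹ := by
  obtain ⟨w, rfl⟩ := QuotientGroup.mk'_surjective _ x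
  induction w using FreeGroup.induction_on with
  | C1 => exact ⟨0, 0, 0, by simp⟩
  | of b =>
    cases b
    · exact ⟨0, 0, 1, by simp [tBS]⟩
    · exact ⟨1, 0, 0, by simp [gBS]⟩
  | inv_of b hb =>
    obtain ⟨p, q, k, h⟩ := hb
    refine ⟨q, p, -k, ?_⟩
    rw [map_inv, h]
    group
  | mul u v hu hv =>
    obtain ⟨p, q, k, hu⟩ := hu
    obtain ⟨p', q', k', hv⟩ := hv
    rw [map_mul, hu, hv]
    rcases le_or_gt q p' with h | h
    · refine ⟨p + (p' - q), q', k * 2 ^ (p' - q) + k', ?_⟩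
      have hg : gBS ^ p' = gBS ^ q * gBS ^ (p' - q) := by
        rw [← pow_add, Nat.add_sub_cancel' h]
      calc gBS ^ p * tBS ^ k * (gBS ^ q)⁻¹ * (gBS ^ p' * tBS ^ k' * (gBS ^ q')⁻¹)
          = gBS ^ p * (tBS ^ k * gBS ^ (p' - q)) * tBS ^ k' * (gBS ^ q')⁻¹ := by
            rw [hg]; group
        _ = gBS ^ p * (gBS ^ (p' - q) * tBS ^ (k * 2 ^ (p' - q))) * tBS ^ k' * (gBS ^ q')⁻¹ := by
            rw [lemA]
        _ = gBS ^ (p + (p' - q)) * tBS ^ (k * 2 ^ (p' - q) + k') * (gBS ^ q')⁻¹ := by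
            rw [pow_add, zpow_add]; group
    · refine ⟨p, q' + (q - p'), k + k' * 2 ^ (q - p'), ?_⟩
      have hg : gBS ^ q = gBS ^ p' * gBS ^ (q - p') := by
        rw [← pow_add, Nat.add_sub_cancel' h.le]
      calc gBS ^ p * tBS ^ k * (gBS ^ q)⁻¹ * (gBS ^ p' * tBS ^ k' * (gBS ^ q')⁻¹)
          = gBS ^ p * tBS ^ k * ((gBS ^ (q - p'))⁻¹ * tBS ^ k') * (gBS ^ q')⁻¹ := by
            rw [hg]; group
        _ = gBS ^ p * tBS ^ k * (tBS ^ (k' * 2 ^ (q - p')) * (gBS ^ (q - p'))⁻¹) * (gBS ^ q')⁻¹ := by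
            rw [lemB]
        _ = gBS ^ p * tBS ^ (k + k' * 2 ^ (q - p')) * (gBS ^ (q' + (q - p')))⁻¹ := by
            rw [pow_add, zpow_add]; group

-- the affine representation
noncomputable def tP : Equiv.Perm ℚ := Equiv.addLeft (1 : ℚ)
noncomputable def gP : Equiv.Perm ℚ := Equiv.mulLeft₀ (2 : ℚ)⁻¹ (by norm_num)

lemma tP_apply (r : ℚ) : tP r = 1 + r := rfl
lemma gP_apply (r : ℚ) : gP r = (2 : ℚ)⁻¹ * r := rfl

lemma tP_inv_apply (s : ℚ) : tP⁻¹ s = -1 + s := by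
  rw [Equiv.Perm.inv_def, Equiv.symm_apply_eq, tP_apply]; ring

lemma gP_inv_apply (s : ℚ) : gP⁻¹ s = 2 * s := by
  rw [Equiv.Perm.inv_def, Equiv.symm_apply_eq, gP_apply]; ring

lemma rel_holds : gP⁻¹ * tP * gP * tP⁻¹ * tP⁻¹ = 1 := by
  ext r
  simp only [Equiv.Perm.mul_apply, Equiv.Perm.one_apply, tP_inv_apply, gP_inv_apply,
    tP_apply, gP_apply]
  ring

noncomputable def φ : BS12 →* Equiv.Perm ℚ :=
  QuotientGroup.lift _ (FreeGroup.lift (fun b => if b then gP else tP)) (by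
    intro x hx
    refine Subgroup.normalClosure_le_normal (N := (FreeGroup.lift
      (fun b : Bool => if b then gP else tP)).ker) ?_ hx
    intro y hy
    rw [Set.mem_singleton_iff] at hy
    subst hy
    simp only [SetLike.mem_coe, MonoidHom.mem_ker, map_mul, map_inv, FreeGroup.lift_apply_of,
      if_true, if_false]
    exact rel_holds)

lemma φ_t : φ tBS = tP := by
  simp [φ, tBS]

lemma φ_g : φ gBS = gP := by
  simp [φ, gBS]

lemma tP_zpow_apply (k : ℤ) (r : ℚ) : (tP ^ k) r = k + r := by
  have hn : ∀ (n : ℕ) (r : ℚ), (tP ^ n) r = n + r := by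
    intro n
    induction n with
    | zero => intro r; simp
    | succ n ih =>
      intro r
      rw [pow_succ, Equiv.Perm.mul_apply, tP_apply, ih]
      push_cast; ring
  cases k with
  | ofNat n => simpa using hn n r
  | negSucc n =>
    rw [zpow_negSucc, Equiv.Perm.inv_def, Equiv.symm_apply_eq, hn]
    push_cast; ring

lemma gP_pow_apply (n : ℕ) (r : ℚ) : (gP ^ n) r = r / 2 ^ n := by
  induction n with
  | zero => simp
  | succ n ih =>
    rw [pow_succ', Equiv.Perm.mul_apply, ih, gP_apply]
    rw [pow_succ, div_mul_eq_div_div, inv_mul_eq_div]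

lemma gP_pow_inv_apply (n : ℕ) (r : ℚ) : (gP ^ n)⁻¹ r = 2 ^ n * r := by
  rw [Equiv.Perm.inv_def, Equiv.symm_apply_eq, gP_pow_apply]
  field_simp

lemma φ_eval (p q : ℕ) (k : ℤ) (r : ℚ) :
    φ (gBS ^ p * tBS ^ k * (gBS ^ q)⁻¹) r = (2 ^ q * r + k) / 2 ^ p := by
  rw [map_mul, map_mul, map_inv, map_pow, map_zpow, map_pow, φ_g, φ_t]
  rw [Equiv.Perm.mul_apply, Equiv.Perm.mul_apply, gP_pow_inv_apply, tP_zpow_apply,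
    gP_pow_apply]
  ring_nf

-- elements of the centralizer have balanced normal form
lemma centralizer_form {c : BS12} (hc : c ∈ Subgroup.centralizer {tBS}) :
    ∃ (p : ℕ) (k : ℤ), c = gBS ^ p * tBS ^ k * (gBS ^ p)⁻¹ := by
  obtain ⟨p, q, k, rfl⟩ := normal_form c
  have hcomm : tBS * (gBS ^ p * tBS ^ k * (gBS ^ q)⁻¹)
      = (gBS ^ p * tBS ^ k * (gBS ^ q)⁻¹) * tBS :=
    Subgroup.mem_centralizer_iff.mp hc tBS rfl
  have h0 : φ tBS ((φ (gBS ^ p * tBS ^ k * (gBS ^ q)⁻¹)) 0)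
      = φ (gBS ^ p * tBS ^ k * (gBS ^ q)⁻¹) (φ tBS 0) := by
    rw [← Equiv.Perm.mul_apply, ← Equiv.Perm.mul_apply, ← map_mul, ← map_mul, hcomm]
  rw [φ_eval, φ_t, tP_apply, φ_eval, tP_apply] at h0
  -- h0 : 1 + (2^q*0 + k)/2^p = (2^q*(1+0) + k)/2^p
  have hpq : p = q := by field_simp at h0; simpa using h0
  exact ⟨p, k, by rw [hpq]⟩

lemma centralizer_mem (p : ℕ) (k : ℤ) :
    gBS ^ p * tBS ^ k * (gBS ^ p)⁻¹ ∈ Subgroup.centralizer {tBS} := by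
  rw [Subgroup.mem_centralizer_iff]
  rintro y rfl
  -- tBS * (g^p t^k g^-p) = (g^p t^k g^-p) * tBS
  calc tBS * (gBS ^ p * tBS ^ k * (gBS ^ p)⁻¹)
      = (tBS ^ (1:ℤ) * gBS ^ p) * tBS ^ k * (gBS ^ p)⁻¹ := by group
    _ = gBS ^ p * tBS ^ ((1:ℤ) * 2 ^ p) * tBS ^ k * (gBS ^ p)⁻¹ := by rw [lemA]
    _ = gBS ^ p * (tBS ^ ((1:ℤ) * 2 ^ p) * tBS ^ k) * (gBS ^ p)⁻¹ := by group
    _ = gBS ^ p * (tBS ^ k * tBS ^ ((1:ℤ) * 2 ^ p)) * (gBS ^ p)⁻¹ := by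
        rw [← zpow_add, ← zpow_add, add_comm]
    _ = gBS ^ p * tBS ^ k * (tBS ^ ((1:ℤ) * 2 ^ p) * (gBS ^ p)⁻¹) := by group
    _ = gBS ^ p * tBS ^ k * ((gBS ^ p)⁻¹ * tBS) := by rw [← lemB]; group
    _ = (gBS ^ p * tBS ^ k * (gBS ^ p)⁻¹) * tBS := by group

lemma φ_slope {c : BS12} (hc : c ∈ Subgroup.centralizer {tBS}) (r : ℚ) :
    φ c r = r + φ c 0 := by
  obtain ⟨p, k, rfl⟩ := centralizer_form hc
  rw [φ_eval, φ_eval]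
  field_simp
  ring

noncomputable def ν : (Subgroup.centralizer {tBS} : Subgroup BS12) →* Multiplicative ℚ where
  toFun c := Multiplicative.ofAdd (φ (c : BS12) 0)
  map_one' := by simp
  map_mul' c d := by
    have h : φ ((c : BS12) * d) 0 = φ (c : BS12) 0 + φ (d : BS12) 0 := by
      rw [map_mul, Equiv.Perm.mul_apply, φ_slope c.2, add_comm]
    simp only [Subgroup.coe_mul, h]
    rfl

lemma ν_val (p : ℕ) (k : ℤ) (c : (Subgroup.centralizer {tBS} : Subgroup BS12))
    (hcv : (c : BS12) = gBS ^ p * tBS ^ k * (gBS ^ p)⁻¹) :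
    ν c = Multiplicative.ofAdd ((k : ℚ) / 2 ^ p) := by
  have : φ (c : BS12) 0 = (k : ℚ) / 2 ^ p := by
    rw [hcv, φ_eval]
    norm_num
  simp only [ν, MonoidHom.coe_mk, OneHom.coe_mk, this]

lemma ν_inj : Function.Injective ν := by
  intro c d h
  have hcd : ∀ e : (Subgroup.centralizer {tBS} : Subgroup BS12),
      ν e = 1 → e = 1 := by
    intro e he
    obtain ⟨p, k, hv⟩ := centralizer_form e.2
    rw [ν_val p k e hv] at he
    have hk : (k : ℚ) / 2 ^ p = 0 := by
      have := congrArg Multiplicative.toAdd he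
      simpa using this
    have hk0 : k = 0 := by
      field_simp at hk
      exact_mod_cast hk
    have : (e : BS12) = 1 := by rw [hv, hk0]; group
    exact Subtype.ext this
  have := hcd (c * d⁻¹) (by rw [map_mul, map_inv, h]; group)
  have : c = d := by
    have h2 := congrArg (· * d) this
    simpa using h2
  exact this

lemma isCyclic_zpowers {G : Type*} [Group G] (u : G) : IsCyclic (Subgroup.zpowers u) := by
  refine ⟨⟨u, Subgroup.mem_zpowers u⟩, fun x => ?_⟩
  obtain ⟨m, hm⟩ := x.2
  exact ⟨m, Subtype.ext (by rw [← hm]; simp)⟩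

/-- In `BS(1,2)`, the centralizer of `t` is locally cyclic but not cyclic. -/
theorem centralizer_locally_cyclic_not_cyclic :
    (∀ S : Subgroup (Subgroup.centralizer {tBS}), S.FG → IsCyclic S) ∧
      ¬ IsCyclic (Subgroup.centralizer {tBS}) := by
  constructor
  · intro S hS
    obtain ⟨T, hT⟩ := hS
    classical
    set pfun : (Subgroup.centralizer {tBS} : Subgroup BS12) → ℕ :=
      fun c => (centralizer_form c.2).choose with hpfun
    set P : ℕ := T.sup pfun with hP
    set u : Multiplicative ℚ := Multiplicative.ofAdd ((1 : ℚ) / 2 ^ P) with hu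
    have hmem : ∀ c ∈ T, ν c ∈ Subgroup.zpowers u := by
      intro c hcT
      obtain ⟨k, hk⟩ := (centralizer_form c.2).choose_spec
      have hple : pfun c ≤ P := Finset.le_sup hcT
      refine ⟨k * 2 ^ (P - pfun c), ?_⟩
      show u ^ (k * 2 ^ (P - pfun c)) = ν c
      rw [ν_val (pfun c) k c hk, hu]
      rw [← ofAdd_zsmul]
      congr 1
      have h2 : (2 : ℚ) ^ P = 2 ^ pfun c * 2 ^ (P - pfun c) := by
        rw [← pow_add, Nat.add_sub_cancel' hple]
      rw [h2]
      push_cast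
      rw [zsmul_eq_mul]
      push_cast
      field_simp
    have hle : S ≤ Subgroup.comap ν (Subgroup.zpowers u) := by
      rw [← hT]
      exact (Subgroup.closure_le _).mpr (fun c hc => hmem c hc)
    set f : S →* (Subgroup.zpowers u) :=
      (ν.comp S.subtype).codRestrict _ (fun s => hle s.2) with hf
    have hinj : Function.Injective f := by
      intro a b hab
      apply Subtype.ext
      apply ν_inj
      have := congrArg (Subtype.val) hab
      exact this
    have hcyc : IsCyclic (Subgroup.zpowers u) := isCyclic_zpowers u
    have : IsCyclic f.range := Subgroup.isCyclic _
    exact isCyclic_of_surjective (MonoidHom.ofInjective hinj).symm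
      (MonoidHom.ofInjective hinj).symm.surjective
  · intro h
    obtain ⟨x, hx⟩ := h.exists_generator
    obtain ⟨p, k, hv⟩ := centralizer_form x.2
    set y : (Subgroup.centralizer {tBS} : Subgroup BS12) :=
      ⟨gBS ^ (p + 1) * tBS ^ (1 : ℤ) * (gBS ^ (p + 1))⁻¹, centralizer_mem _ _⟩ with hy
    obtain ⟨m, hm⟩ := hx y
    have hνx : ν x = Multiplicative.ofAdd ((k : ℚ) / 2 ^ p) := ν_val p k x hv
    have hνy : ν y = Multiplicative.ofAdd ((1 : ℚ) / 2 ^ (p + 1)) := by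
      have := ν_val (p + 1) 1 y rfl
      simpa using this
    have heq := congrArg ν hm
    rw [map_zpow, hνx, hνy, ← ofAdd_zsmul] at heq
    have heq2 : (m : ℚ) * ((k : ℚ) / 2 ^ p) = 1 / 2 ^ (p + 1) := by
      have := congrArg Multiplicative.toAdd heq
      simpa [zsmul_eq_mul] using this
    have hne2 : (2 : ℚ) ^ p ≠ 0 := by positivity
    have hne : (2 : ℚ) ^ (p + 1) ≠ 0 := by positivity
    rw [← mul_div_assoc, div_eq_div_iff hne2 hne] at heq2
    have h3 : ((m : ℚ) * k * 2) * 2 ^ p = 1 * 2 ^ p := by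
      rw [pow_succ] at heq2
      linear_combination heq2
    have h4 : (m : ℚ) * k * 2 = 1 := mul_right_cancel₀ hne2 h3
    have h5 : (m * k * 2 : ℤ) = 1 := by exact_mod_cast h4
    have : (2 : ℤ) ∣ 1 := ⟨m * k, by linarith⟩
    norm_num at this
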